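/- Every partition of n ≥ 1 is (i,1)-equivalent to a strict partition. -/
import Mathlib


/-- `μ : ℕ → ℕ` represents a partition via its parts `μ 1 ≥ μ 2 ≥ ⋯`; the index `0` is
unused and required to be `0`.  The parts are weakly decreasing and only finitely many
are nonzero. -/
def IsPartition (μ : ℕ → ℕ) : Prop :=
  μ 0 = 0 ∧ (∀ i, 1 ≤ i → μ (i + 1) ≤ μ i) ∧ {i | μ i ≠ 0}.Finite

/-- The weight `|μ|` of a partition: the sum of its parts. -/
noncomputable def pweight (μ : ℕ → ℕ) : ℕ := ∑ᶠ i, μ i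

/-- The length `ℓ(μ)`: the number of nonzero parts. -/
noncomputable def plength (μ : ℕ → ℕ) : ℕ := Set.ncard {i | 1 ≤ i ∧ μ i ≠ 0}

/-- A partition is strict if its nonzero parts are pairwise distinct. -/
def IsStrict (μ : ℕ → ℕ) : Prop := ∀ i j, 1 ≤ i → i < j → μ j ≠ 0 → μ j < μ i

/-- `(i, j)` is a cell of the Ferrers board of `μ`. -/
def Cell (μ : ℕ → ℕ) (i j : ℕ) : Prop := 1 ≤ i ∧ 1 ≤ j ∧ j ≤ μ i

/-- The Ferrers board of `μ` as a set of cells. -/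
def Board (μ : ℕ → ℕ) : Set (ℕ × ℕ) := {p | Cell μ p.1 p.2}

/-- The number of ways to place `k` non-attacking rooks on the Ferrers board of `μ`,
i.e. the number of `k`-element subsets of the board whose cells have pairwise distinct
row indices and pairwise distinct column indices. -/
noncomputable def rookCount (μ : ℕ → ℕ) (k : ℕ) : ℕ :=
  Set.ncard {s : Finset (ℕ × ℕ) | s.card = k ∧ (∀ p ∈ s, Cell μ p.1 p.2) ∧
    ∀ p ∈ s, ∀ q ∈ s, p ≠ q → p.1 ≠ q.1 ∧ p.2 ≠ q.2}

/-- Rook equivalence of partitions. -/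
def RookEquiv (μ ν : ℕ → ℕ) : Prop := ∀ k, rookCount μ k = rookCount ν k

/-- `α` contains `μ` as a pattern: there are strictly increasing functions `f, g` on the
positive integers such that `(i, j)` is a cell of `μ` iff `(f i, g j)` is a cell of `α`. -/
def Contains (α μ : ℕ → ℕ) : Prop :=
  ∃ f g : ℕ → ℕ,
    (∀ i, 1 ≤ i → 1 ≤ f i) ∧ (∀ j, 1 ≤ j → 1 ≤ g j) ∧
    (∀ i j, 1 ≤ i → i < j → f i < f j) ∧
    (∀ i j, 1 ≤ i → i < j → g i < g j) ∧
    (∀ i j, 1 ≤ i → 1 ≤ j → (Cell μ i j ↔ Cell α (f i) (g j)))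

/-- `P_n(μ)`: the set of partitions of `n` containing `μ`. -/
def PnSet (n : ℕ) (μ : ℕ → ℕ) : Set (ℕ → ℕ) :=
  {α | IsPartition α ∧ pweight α = n ∧ Contains α μ}

/-- `P_n(μ, k)`: the members of `P_n(μ)` whose first part is `k + μ 1`. -/
def PnSetK (n : ℕ) (μ : ℕ → ℕ) (k : ℕ) : Set (ℕ → ℕ) :=
  {α | α ∈ PnSet n μ ∧ α 1 = k + μ 1}

/-- Wilf equivalence of partitions. -/
def WilfEquiv (μ ν : ℕ → ℕ) : Prop :=
  ∀ n, 1 ≤ n → (PnSet n μ).ncard = (PnSet n ν).ncard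

/-- The multiplicity of `v` among the parts `μ 1, μ 2, …` of `μ`. -/
noncomputable def partCount (μ : ℕ → ℕ) (v : ℕ) : ℕ := Set.ncard {i | 1 ≤ i ∧ μ i = v}

/-- `γ` is the extension of `ν` by the pair `(α, β)`: `γ` is a partition whose multiset of
nonzero parts is the multiset union of the nonzero parts of `ν + α` and those of `β`. -/
def IsExtension (ν α β γ : ℕ → ℕ) : Prop :=
  IsPartition γ ∧
  ∀ v, 1 ≤ v → partCount γ v = partCount (fun i => ν i + α i) v + partCount β v

/-- `ν` is the `(i, j)`-transform of `μ`: the board of `ν` is obtained from the board of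
`μ` by replacing the subboard of cells weakly southeast of `(i, j)` by its conjugate. -/
def IsTransform (i j : ℕ) (μ ν : ℕ → ℕ) : Prop :=
  IsPartition μ ∧ IsPartition ν ∧ 1 ≤ i ∧ 1 ≤ j ∧
  Board ν = (Board μ \ {p ∈ Board μ | i ≤ p.1 ∧ j ≤ p.2}) ∪
    (fun p : ℕ × ℕ => (i + (p.2 - j), j + (p.1 - i))) '' {p ∈ Board μ | i ≤ p.1 ∧ j ≤ p.2}

/-- One step: `ν` is an `(i, 1)`-transform of `μ` for some `i`. -/
def TransformRel1 (μ ν : ℕ → ℕ) : Prop := ∃ i, IsTransform i 1 μ ν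

/-- `(i, 1)`-equivalence: a finite (possibly empty) sequence of `(i, 1)`-transformations. -/
def TransformEquiv1 : (ℕ → ℕ) → (ℕ → ℕ) → Prop := Relation.ReflTransGen TransformRel1

/-- One step: `ν` is an `(i, j)`-transform of `μ` for some `i, j`. -/
def TransformRel (μ ν : ℕ → ℕ) : Prop := ∃ i j, IsTransform i j μ ν

/-- Differing by a finite sequence of `(i, j)`-transformations. -/
def TransformEquiv : (ℕ → ℕ) → (ℕ → ℕ) → Prop := Relation.ReflTransGen TransformRel

/-- Row `i` of `μ` is salient if `i + μ i ≥ j + μ j` for some `j > i`. -/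
def Salient (μ : ℕ → ℕ) (i : ℕ) : Prop := ∃ j, i < j ∧ j + μ j ≤ i + μ i

/-- The multiplicity of `v` in the multiset `S_μ = {i + μ i : row i of μ is salient}`. -/
noncomputable def salientCount (μ : ℕ → ℕ) (v : ℕ) : ℕ :=
  Set.ncard {i | 1 ≤ i ∧ Salient μ i ∧ i + μ i = v}

/-- The staircase rank of `μ`: the largest `k` with `μ i ≥ k - i + 1` for `1 ≤ i ≤ k`. -/
noncomputable def staircaseRank (μ : ℕ → ℕ) : ℕ :=
  sSup {k | ∀ i, 1 ≤ i → i ≤ k → k + 1 ≤ μ i + i}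

/-- The number of cells of the L in `μ` with corner `p = (i, j)`: the cells `(i, x)` of `μ`
with `x ≥ j` together with the cells `(y, j)` with `1 ≤ y ≤ i`. -/
def LWeight (μ : ℕ → ℕ) (p : ℕ × ℕ) : ℕ := (μ p.1 - p.2) + p.1

/-- `c` lists the corners of a nested sequence of `k` L's in `μ`: each corner is a cell of
`μ`, and later corners are strictly above and strictly to the right of earlier ones. -/
def IsNested (μ : ℕ → ℕ) {k : ℕ} (c : Fin k → ℕ × ℕ) : Prop :=
  (∀ a, Cell μ (c a).1 (c a).2) ∧
  ∀ a b : Fin k, a < b → (c b).1 < (c a).1 ∧ (c a).2 < (c b).2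

/-- `w_k(μ)`: the maximum weight of a sequence of `k` nested L's in `μ`
(`0` if there is no such sequence). -/
noncomputable def nestedLMax (μ : ℕ → ℕ) (k : ℕ) : ℕ :=
  sSup {w | ∃ c : Fin k → ℕ × ℕ, IsNested μ c ∧ ∑ a, LWeight μ (c a) = w}

section StrictifyAux

open Set

/-- number of rows `a ≥ i` with `μ a ≥ k` (column `k` of the conjugate of the tail). -/
noncomputable def tcount (μ : ℕ → ℕ) (i k : ℕ) : ℕ := Set.ncard {a | i ≤ a ∧ k ≤ μ a}

/-- the `(i,1)`-transform: conjugate the tail of `μ` from row `i` on. -/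
noncomputable def Tr (i : ℕ) (μ : ℕ → ℕ) : ℕ → ℕ :=
  fun x => if x < i then μ x else tcount μ i (x - i + 1)

/-- the invariant: `sSup` of `p.1 + p.2` over cells of the board. -/
noncomputable def DD (μ : ℕ → ℕ) : ℕ := sSup ((fun p : ℕ × ℕ => p.1 + p.2) '' Board μ)

def ctail (μ : ℕ → ℕ) : ℕ → ℕ := fun a => if a = 0 then 0 else μ (a + 1)

def ccons (c : ℕ) (τ : ℕ → ℕ) : ℕ → ℕ :=
  fun x => if x = 0 then 0 else if x = 1 then c else τ (x - 1)

lemma ccons_zero {c : ℕ} {τ : ℕ → ℕ} : ccons c τ 0 = 0 := rfl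

lemma ccons_one {c : ℕ} {τ : ℕ → ℕ} : ccons c τ 1 = c := by simp [ccons]

lemma ccons_succ {c : ℕ} {τ : ℕ → ℕ} (x : ℕ) (hx : 2 ≤ x) : ccons c τ x = τ (x - 1) := by
  simp only [ccons, if_neg (by omega : ¬ x = 0), if_neg (by omega : ¬ x = 1)]

lemma ctail_succ {μ : ℕ → ℕ} (x : ℕ) (hx : 1 ≤ x) : ctail μ x = μ (x + 1) := by
  simp only [ctail, if_neg (by omega : ¬ x = 0)]

lemma part_mono {μ : ℕ → ℕ} (hμ : IsPartition μ) {x y : ℕ} (hx : 1 ≤ x) (hxy : x ≤ y) :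
    μ y ≤ μ x := by
  obtain ⟨-, hmono, -⟩ := hμ
  induction y with
  | zero => omega
  | succ n ih =>
    rcases Nat.lt_or_ge x (n + 1) with h | h
    · exact le_trans (hmono n (by omega)) (ih (by omega))
    · have : x = n + 1 := by omega
      simp [this]

lemma tcount_set_finite {μ : ℕ → ℕ} (hμ : IsPartition μ) (i k : ℕ) (hk : 1 ≤ k) :
    {a | i ≤ a ∧ k ≤ μ a}.Finite :=
  hμ.2.2.subset (fun a ha => by simp only [Set.mem_setOf_eq] at *; omega)

lemma tcount_iff {μ : ℕ → ℕ} (hμ : IsPartition μ) {i k a : ℕ} (hi : 1 ≤ i) (hk : 1 ≤ k)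
    (ha : i ≤ a) : k ≤ μ a ↔ a < i + tcount μ i k := by
  constructor
  · intro h
    have hsub : Set.Icc i a ⊆ {x | i ≤ x ∧ k ≤ μ x} := by
      intro x hx
      simp only [Set.mem_Icc] at hx
      exact ⟨hx.1, le_trans h (part_mono hμ (by omega) hx.2)⟩
    have hcard := Set.ncard_le_ncard hsub (tcount_set_finite hμ i k hk)
    rw [show Set.Icc i a = ↑(Finset.Icc i a) by simp] at hcard
    rw [Set.ncard_coe_finset, Nat.card_Icc] at hcard
    unfold tcount
    omega
  · intro h
    by_contra hc
    push_neg at hc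
    have hsub : {x | i ≤ x ∧ k ≤ μ x} ⊆ ↑(Finset.Ico i a) := by
      intro x hx
      simp only [Set.mem_setOf_eq] at hx
      simp only [Finset.coe_Ico, Set.mem_Ico]
      refine ⟨hx.1, ?_⟩
      by_contra hxa
      push_neg at hxa
      have := part_mono hμ (by omega : 1 ≤ a) hxa
      omega
    have hcard := Set.ncard_le_ncard hsub (Finset.Ico i a).finite_toSet
    rw [Set.ncard_coe_finset, Nat.card_Ico] at hcard
    unfold tcount at h
    omega

lemma board_finite {μ : ℕ → ℕ} (hμ : IsPartition μ) : (Board μ).Finite := by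
  apply Set.Finite.subset (hμ.2.2.prod (Set.finite_Icc 1 (μ 1)))
  rintro ⟨x, y⟩ hp
  have hx : 1 ≤ x := hp.1
  have hy : 1 ≤ y := hp.2.1
  have hyx : y ≤ μ x := hp.2.2
  refine ⟨?_, ?_⟩
  · show μ x ≠ 0
    omega
  · simp only [Set.mem_Icc]
    exact ⟨hy, le_trans hyx (part_mono hμ le_rfl hx)⟩

lemma sum_le_DD {μ : ℕ → ℕ} (hμ : IsPartition μ) {p : ℕ × ℕ} (hp : p ∈ Board μ) :
    p.1 + p.2 ≤ DD μ :=
  le_csSup ((board_finite hμ).image _).bddAbove ⟨p, hp, rfl⟩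

lemma part1_le {τ : ℕ → ℕ} (hτ : IsPartition τ) {c : ℕ} (hc : DD τ ≤ c) : τ 1 ≤ c := by
  by_cases h : τ 1 = 0
  · omega
  · have hcell : ((1, τ 1) : ℕ × ℕ) ∈ Board τ := ⟨le_rfl, by omega, le_rfl⟩
    have := sum_le_DD hτ hcell
    simp only at this
    omega

end StrictifyAux

section StrictifyAux2

lemma Tr_isPartition {μ : ℕ → ℕ} (hμ : IsPartition μ) {i : ℕ} (hi : 1 ≤ i)
    (hv : 2 ≤ i → tcount μ i 1 ≤ μ (i - 1)) : IsPartition (Tr i μ) := by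
  refine ⟨?_, ?_, ?_⟩
  · have h0 : (0 : ℕ) < i := hi
    simp [Tr, h0, hμ.1]
  · intro x hx
    by_cases h1 : x + 1 < i
    · simp only [Tr, if_pos h1, if_pos (by omega : x < i)]
      exact hμ.2.1 x hx
    · by_cases h2 : x < i
      · have hieq : i = x + 1 := by omega
        simp only [Tr, if_neg h1, if_pos h2]
        have he : x + 1 - i + 1 = 1 := by omega
        rw [he]
        have hvv := hv (by omega)
        have hx1 : i - 1 = x := by omega
        rw [hx1] at hvv
        exact hvv
      · simp only [Tr, if_neg h1, if_neg h2]
        unfold tcount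
        apply Set.ncard_le_ncard ?_ (tcount_set_finite hμ i (x - i + 1) (by omega))
        intro a ha
        simp only [Set.mem_setOf_eq] at ha ⊢
        omega
  · apply Set.Finite.subset (hμ.2.2.union (Set.finite_Icc 0 (i + μ i)))
    intro x hx
    simp only [Set.mem_setOf_eq, Tr] at hx
    by_cases h2 : x < i
    · rw [if_pos h2] at hx
      exact Or.inl hx
    · right
      rw [if_neg h2] at hx
      obtain ⟨a, ha⟩ := Set.nonempty_of_ncard_ne_zero hx
      simp only [Set.mem_setOf_eq] at ha
      have := part_mono hμ hi ha.1
      simp only [Set.mem_Icc]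
      omega

lemma Tr_isTransform {μ : ℕ → ℕ} (hμ : IsPartition μ) {i : ℕ} (hi : 1 ≤ i)
    (hv : 2 ≤ i → tcount μ i 1 ≤ μ (i - 1)) : IsTransform i 1 μ (Tr i μ) := by
  refine ⟨hμ, Tr_isPartition hμ hi hv, hi, le_rfl, ?_⟩
  ext ⟨x, y⟩
  simp only [Board, Cell, Set.mem_setOf_eq, Set.mem_union, Set.mem_diff, Set.mem_sep_iff,
    Set.mem_image, Prod.exists, Prod.mk.injEq]
  constructor
  · rintro ⟨hx1, hy1, hyT⟩
    by_cases h2 : x < i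
    · left
      rw [show Tr i μ x = μ x from by simp [Tr, h2]] at hyT
      exact ⟨⟨hx1, hy1, hyT⟩, by omega⟩
    · right
      rw [show Tr i μ x = tcount μ i (x - i + 1) from by simp [Tr, h2]] at hyT
      refine ⟨i + (y - 1), x - i + 1, ⟨⟨by omega, by omega, ?_⟩, by omega, by omega⟩,
        by omega, by omega⟩
      exact (tcount_iff hμ hi (by omega) (by omega : i ≤ i + (y - 1))).mpr (by omega)
  · rintro (⟨hcell, hns⟩ | ⟨a, b, ⟨⟨ha1, hb1, hba⟩, hia, hb1'⟩, hfx, hfy⟩)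
    · obtain ⟨hx1, hy1, hyμ⟩ := id hcell
      have hxi : x < i := by
        by_contra hcon
        exact hns ⟨hcell, by omega, hy1⟩
      exact ⟨hx1, hy1, by rw [show Tr i μ x = μ x from by simp [Tr, hxi]]; exact hyμ⟩
    · refine ⟨by omega, by omega, ?_⟩
      have hxi : ¬ x < i := by omega
      rw [show Tr i μ x = tcount μ i (x - i + 1) from by simp [Tr, hxi]]
      have hb' : x - i + 1 = b := by omega
      rw [hb']
      have := (tcount_iff hμ hi hb1 hia).mp hba
      omega

lemma DD_transform {i : ℕ} {μ ν : ℕ → ℕ} (h : IsTransform i 1 μ ν) : DD ν = DD μ := by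
  obtain ⟨hμ, hν, hi, -, hb⟩ := h
  have h1 : ∀ p ∈ {p ∈ Board μ | i ≤ p.1 ∧ 1 ≤ p.2},
      (fun q : ℕ × ℕ => q.1 + q.2) ((fun p : ℕ × ℕ => (i + (p.2 - 1), 1 + (p.1 - i))) p)
        = (fun q : ℕ × ℕ => q.1 + q.2) p := by
    rintro ⟨a, b⟩ ⟨-, ha, hb1⟩
    simp only
    omega
  unfold DD
  rw [hb, Set.image_union, Set.image_image, Set.image_congr h1, ← Set.image_union,
    Set.diff_union_of_subset (Set.sep_subset _ _)]

lemma DD_equiv {μ ν : ℕ → ℕ} (h : TransformEquiv1 μ ν) : DD ν = DD μ := by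
  induction h with
  | refl => rfl
  | tail hab hbc ih =>
    obtain ⟨i, ht⟩ := hbc
    rw [DD_transform ht, ih]

lemma ctail_isPartition {μ : ℕ → ℕ} (hμ : IsPartition μ) : IsPartition (ctail μ) := by
  refine ⟨rfl, ?_, ?_⟩
  · intro x hx
    rw [ctail_succ (x + 1) (by omega), ctail_succ x hx]
    exact hμ.2.1 (x + 1) (by omega)
  · apply Set.Finite.subset (hμ.2.2.image (fun n => n - 1))
    intro x hx
    simp only [Set.mem_setOf_eq] at hx
    by_cases h : x = 0
    · simp [h, ctail] at hx
    · rw [ctail_succ x (by omega)] at hx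
      exact ⟨x + 1, hx, by show x + 1 - 1 = x; omega⟩

lemma ccons_isPartition {c : ℕ} {τ : ℕ → ℕ} (hτ : IsPartition τ) (hc : τ 1 ≤ c) :
    IsPartition (ccons c τ) := by
  refine ⟨rfl, ?_, ?_⟩
  · intro x hx
    by_cases h1 : x = 1
    · subst h1
      rw [ccons_succ 2 le_rfl, ccons_one]
      exact hc
    · rw [ccons_succ (x + 1) (by omega), ccons_succ x (by omega)]
      have := hτ.2.1 (x - 1) (by omega)
      simpa [show x - 1 + 1 = x by omega] using this
  · apply Set.Finite.subset ((Set.finite_singleton 1).union (hτ.2.2.image (· + 1)))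
    intro x hx
    simp only [Set.mem_setOf_eq] at hx
    by_cases h0 : x = 0
    · simp [h0, ccons_zero] at hx
    · by_cases h1 : x = 1
      · exact Or.inl (by simp [h1])
      · right
        rw [ccons_succ x (by omega)] at hx
        exact ⟨x - 1, hx, by show x - 1 + 1 = x; omega⟩

lemma ccons_ctail {ρ : ℕ → ℕ} (hρ : IsPartition ρ) : ccons (ρ 1) (ctail ρ) = ρ := by
  funext x
  match x with
  | 0 => rw [ccons_zero, hρ.1]
  | 1 => rw [ccons_one]
  | (n + 2) =>
    rw [ccons_succ (n + 2) (by omega), show n + 2 - 1 = n + 1 by omega,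
      ctail_succ (n + 1) (by omega)]

end StrictifyAux2

section StrictifyAux3

lemma lift_step {i : ℕ} {τ ρ : ℕ → ℕ} (h : IsTransform i 1 τ ρ) {c : ℕ} (hc : DD τ ≤ c) :
    IsTransform (i + 1) 1 (ccons c τ) (ccons c ρ) := by
  have hDρ : DD ρ = DD τ := DD_transform h
  obtain ⟨hτ, hρ, hi, -, hb⟩ := h
  have hτ1 : τ 1 ≤ c := part1_le hτ hc
  have hρ1 : ρ 1 ≤ c := part1_le hρ (by omega)
  refine ⟨ccons_isPartition hτ hτ1, ccons_isPartition hρ hρ1, by omega, le_rfl, ?_⟩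
  ext ⟨x, y⟩
  simp only [Board, Cell, Set.mem_setOf_eq, Set.mem_union, Set.mem_diff, Set.mem_sep_iff,
    Set.mem_image, Prod.exists, Prod.mk.injEq]
  match x with
  | 0 =>
    constructor
    · rintro ⟨h0, -⟩; omega
    · rintro (⟨⟨h0, -⟩, -⟩ | ⟨a, b, ⟨⟨-, hb1, -⟩, -, -⟩, heq1, -⟩) <;> omega
  | 1 =>
    constructor
    · rintro ⟨-, hy, hyc⟩
      rw [ccons_one] at hyc
      exact Or.inl ⟨⟨le_rfl, hy, by rw [ccons_one]; exact hyc⟩, by omega⟩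
    · rintro (⟨⟨-, hy, hyc⟩, -⟩ | ⟨a, b, ⟨⟨-, hb1, -⟩, -, -⟩, heq1, -⟩)
      · rw [ccons_one] at hyc
        exact ⟨le_rfl, hy, by rw [ccons_one]; exact hyc⟩
      · omega
  | (n + 2) =>
    have hcell := Set.ext_iff.mp hb (n + 1, y)
    simp only [Board, Cell, Set.mem_setOf_eq, Set.mem_union, Set.mem_diff, Set.mem_sep_iff,
      Set.mem_image, Prod.exists, Prod.mk.injEq] at hcell
    constructor
    · rintro ⟨-, hy, hyc⟩
      rw [ccons_succ (n + 2) (by omega), show n + 2 - 1 = n + 1 by omega] at hyc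
      rcases hcell.mp ⟨by omega, hy, hyc⟩ with ⟨⟨h1, hy2, hyc2⟩, hns⟩ |
        ⟨a, b, ⟨⟨ha1, hb1, hba⟩, hia, hb1'⟩, heq1, heq2⟩
      · left
        refine ⟨⟨by omega, hy, ?_⟩, ?_⟩
        · rw [ccons_succ (n + 2) (by omega), show n + 2 - 1 = n + 1 by omega]
          exact hyc2
        · intro hcon
          exact hns ⟨⟨h1, hy2, hyc2⟩, by omega, hy⟩
      · right
        refine ⟨a + 1, b, ⟨⟨by omega, hb1, ?_⟩, by omega, hb1'⟩, by omega, by omega⟩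
        rw [ccons_succ (a + 1) (by omega), show a + 1 - 1 = a by omega]
        exact hba
    · rintro (⟨⟨-, hy, hyc⟩, hns⟩ | ⟨a, b, ⟨⟨ha1, hb1, hba⟩, hia, hb1'⟩, heq1, heq2⟩)
      · rw [ccons_succ (n + 2) (by omega), show n + 2 - 1 = n + 1 by omega] at hyc
        have hcρ : 1 ≤ n + 1 ∧ 1 ≤ y ∧ y ≤ ρ (n + 1) := by
          apply hcell.mpr
          left
          refine ⟨⟨by omega, hy, hyc⟩, ?_⟩
          rintro ⟨-, hi2, hy2⟩
          exact hns ⟨⟨by omega, hy, by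
            rw [ccons_succ (n + 2) (by omega), show n + 2 - 1 = n + 1 by omega]; exact hyc⟩,
            by omega, hy2⟩
        refine ⟨by omega, hy, ?_⟩
        rw [ccons_succ (n + 2) (by omega), show n + 2 - 1 = n + 1 by omega]
        exact hcρ.2.2
      · have ha2 : 2 ≤ a := by omega
        rw [ccons_succ a ha2] at hba
        have hcρ : 1 ≤ n + 1 ∧ 1 ≤ y ∧ y ≤ ρ (n + 1) := by
          apply hcell.mpr
          right
          exact ⟨a - 1, b, ⟨⟨by omega, hb1, hba⟩, by omega, hb1⟩, by omega, by omega⟩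
        refine ⟨by omega, by omega, ?_⟩
        rw [ccons_succ (n + 2) (by omega), show n + 2 - 1 = n + 1 by omega]
        exact hcρ.2.2

lemma lift_equiv {τ τ' : ℕ → ℕ} (h : TransformEquiv1 τ τ') {c : ℕ} (hc : DD τ ≤ c) :
    TransformEquiv1 (ccons c τ) (ccons c τ') := by
  induction h with
  | refl => exact Relation.ReflTransGen.refl
  | tail hab hbc ih =>
    obtain ⟨i, ht⟩ := hbc
    exact Relation.ReflTransGen.tail ih ⟨i + 1, lift_step ht (by rw [DD_equiv hab]; exact hc)⟩

lemma DD_ctail_lt {ρ : ℕ → ℕ} (hρ : IsPartition ρ) (h0 : 0 < DD ρ) : DD (ctail ρ) < DD ρ := by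
  have hub : ∀ s ∈ (fun p : ℕ × ℕ => p.1 + p.2) '' Board (ctail ρ), s < DD ρ := by
    rintro s ⟨⟨a, b⟩, hab, rfl⟩
    have ha1 : 1 ≤ a := hab.1
    have hb1 : 1 ≤ b := hab.2.1
    have hba : b ≤ ctail ρ a := hab.2.2
    rw [ctail_succ a ha1] at hba
    have hcell : ((a + 1, b) : ℕ × ℕ) ∈ Board ρ := ⟨by omega, hb1, hba⟩
    have := sum_le_DD hρ hcell
    simp only at this ⊢
    omega
  by_cases he : ((fun p : ℕ × ℕ => p.1 + p.2) '' Board (ctail ρ)).Nonempty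
  · have h1 : DD (ctail ρ) ≤ DD ρ - 1 := csSup_le he (fun x hx => by have := hub x hx; omega)
    omega
  · have h1 : DD (ctail ρ) = 0 := by
      unfold DD
      rw [Set.not_nonempty_iff_eq_empty.mp he]
      exact csSup_empty
    omega

lemma aux_strictify : ∀ d μ, IsPartition μ → DD μ ≤ d →
    ∃ ν, IsPartition ν ∧ IsStrict ν ∧ TransformEquiv1 μ ν := by
  intro d
  induction d using Nat.strong_induction_on with
  | _ d ih =>
    intro μ hμ hd
    by_cases h0 : μ 1 = 0
    · refine ⟨μ, hμ, ?_, Relation.ReflTransGen.refl⟩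
      intro p q hp hpq hq
      exfalso
      have := part_mono hμ (x := 1) (y := q) le_rfl (by omega)
      omega
    · have h11 : ((1, 1) : ℕ × ℕ) ∈ Board μ := ⟨le_rfl, le_rfl, show 1 ≤ μ 1 by omega⟩
      have hD2 : 2 ≤ DD μ := sum_le_DD hμ h11
      have hne : ((fun p : ℕ × ℕ => p.1 + p.2) '' Board μ).Nonempty := ⟨2, (1, 1), h11, rfl⟩
      have hmem := Nat.sSup_mem hne ((board_finite hμ).image _).bddAbove
      obtain ⟨⟨a, b⟩, hab, hsum0⟩ := hmem
      set D := DD μ with hDdef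
      have hsum : a + b = D := hsum0
      have ha1 : 1 ≤ a := hab.1
      have hb1 : 1 ≤ b := hab.2.1
      have hba : b ≤ μ a := hab.2.2
      have haD : a + μ a = D := by
        have hca : ((a, μ a) : ℕ × ℕ) ∈ Board μ := ⟨ha1, show 1 ≤ μ a by omega, le_rfl⟩
        have h1 : a + μ a ≤ D := sum_le_DD hμ hca
        omega
      have hμa1 : 1 ≤ μ a := by omega
      have hval : 2 ≤ a → tcount μ a 1 ≤ μ (a - 1) := by
        intro ha2
        have hsub : {x | a ≤ x ∧ 1 ≤ μ x} ⊆ ↑(Finset.Icc a (D - 1)) := by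
          intro x hx
          simp only [Set.mem_setOf_eq] at hx
          simp only [Finset.coe_Icc, Set.mem_Icc]
          refine ⟨hx.1, ?_⟩
          have hcx : ((x, μ x) : ℕ × ℕ) ∈ Board μ := ⟨show 1 ≤ x by omega, show 1 ≤ μ x by omega, le_rfl⟩
          have := sum_le_DD hμ hcx
          omega
        have hcard := Set.ncard_le_ncard hsub (Finset.Icc a (D - 1)).finite_toSet
        rw [Set.ncard_coe_finset, Nat.card_Icc] at hcard
        have hmono := part_mono hμ (x := a - 1) (y := a) (by omega) (by omega)
        unfold tcount
        omega
      have hstep1 : IsTransform a 1 μ (Tr a μ) := Tr_isTransform hμ ha1 hval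
      set σ := Tr a μ with hσdef
      have hσP : IsPartition σ := hstep1.2.1
      have hσsupp : ∀ x, 1 ≤ x → (σ x ≠ 0 ↔ x ≤ D - 1) := by
        intro x hx
        by_cases hxa : x < a
        · rw [show σ x = μ x from by simp [hσdef, Tr, hxa]]
          constructor
          · intro _; omega
          · intro _
            have := part_mono hμ (x := x) (y := a) hx (by omega)
            omega
        · rw [show σ x = tcount μ a (x - a + 1) from by simp [hσdef, Tr, hxa]]
          have hiff := tcount_iff hμ (i := a) (k := x - a + 1) (a := a) ha1 (by omega) le_rfl
          constructor
          · intro h2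
            have := hiff.mpr (by omega)
            omega
          · intro h2
            have := hiff.mp (by omega)
            omega
      have hsupport_set : {x | 1 ≤ x ∧ 1 ≤ σ x} = ↑(Finset.Icc 1 (D - 1)) := by
        ext x
        simp only [Finset.coe_Icc, Set.mem_Icc, Set.mem_setOf_eq]
        constructor
        · rintro ⟨hx1, hx2⟩
          exact ⟨hx1, (hσsupp x hx1).mp (by omega)⟩
        · rintro ⟨hx1, hx2⟩
          have := (hσsupp x hx1).mpr hx2
          exact ⟨hx1, by omega⟩
      have hstep2 : IsTransform 1 1 σ (Tr 1 σ) := Tr_isTransform hσP le_rfl (by omega)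
      set ρ := Tr 1 σ with hρdef
      have hρP : IsPartition ρ := hstep2.2.1
      have hρ1 : ρ 1 = D - 1 := by
        rw [show ρ 1 = tcount σ 1 1 from by simp [hρdef, Tr]]
        unfold tcount
        rw [show {a_1 | 1 ≤ a_1 ∧ 1 ≤ σ a_1} = ↑(Finset.Icc 1 (D - 1)) from hsupport_set]
        rw [Set.ncard_coe_finset, Nat.card_Icc]
        omega
      have hDρ : DD ρ = D := by rw [DD_transform hstep2, DD_transform hstep1]
      set τ := ctail ρ with hτdef
      have hτP : IsPartition τ := ctail_isPartition hρP
      have hτD : DD τ < D := by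
        have h1 := DD_ctail_lt hρP (by omega)
        rw [← hτdef] at h1
        omega
      obtain ⟨τ', hτ'P, hτ'S, hτ'E⟩ := ih (DD τ) (by omega) τ hτP le_rfl
      have hDτ' : DD τ' = DD τ := DD_equiv hτ'E
      have hlift : TransformEquiv1 (ccons (ρ 1) τ) (ccons (ρ 1) τ') :=
        lift_equiv hτ'E (by omega)
      rw [ccons_ctail hρP] at hlift
      refine ⟨ccons (ρ 1) τ', ccons_isPartition hτ'P (part1_le hτ'P (by omega)), ?_, ?_⟩
      · intro p q hp hpq hq
        by_cases hp1 : p = 1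
        · subst hp1
          rw [ccons_succ q (by omega)] at hq ⊢
          rw [ccons_one]
          have h1 : τ' (q - 1) ≤ τ' 1 := part_mono hτ'P le_rfl (by omega)
          have hτ'1pos : 1 ≤ τ' 1 := by omega
          have hc1 : ((1, τ' 1) : ℕ × ℕ) ∈ Board τ' := ⟨le_rfl, hτ'1pos, le_rfl⟩
          have h2 := sum_le_DD hτ'P hc1
          simp only at h2
          omega
        · rw [ccons_succ q (by omega)] at hq ⊢
          rw [ccons_succ p (by omega)]
          exact hτ'S (p - 1) (q - 1) (by omega) (by omega) hq
      · exact Relation.ReflTransGen.trans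
          (Relation.ReflTransGen.trans (Relation.ReflTransGen.single ⟨a, hstep1⟩)
            (Relation.ReflTransGen.single ⟨1, hstep2⟩)) hlift

end StrictifyAux3

theorem equiv1_to_strict (n : ℕ) (hn : 1 ≤ n) (μ : ℕ → ℕ)
    (hμ : IsPartition μ) (hμn : pweight μ = n) :
    ∃ ν : ℕ → ℕ, IsPartition ν ∧ IsStrict ν ∧ TransformEquiv1 μ ν := by
  exact aux_strictify (DD μ) μ hμ le_rfl
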